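/- Let n₁, ..., n_k be positive integers and L = lcm(n₁, ..., n_k), and let w be a natural number. Then (1/L) Σ_{l=1}^{L} (∏_{j=1}^{k} gcd(l, n_j))^w = ∏_{p | L, p prime} (1/p^{ν_{p,k}}) Σ_{l=1}^{p^{ν_{p,k}}} (∏_{j=1}^{k} gcd(l, p^{ord_p(n_j)}))^w, where ν_{p,k} = max_j ord_p(n_j). -/

import Mathlib

open Finset

private lemma gcd_mul_coprime {m n : ℕ} (h : Nat.Coprime m n) (k : ℕ) :
    Nat.gcd k (m * n) = Nat.gcd k m * Nat.gcd k n := by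
  apply Nat.dvd_antisymm
  · simpa [gcd_eq_nat_gcd] using gcd_mul_dvd_mul_gcd k m n
  · have hco : Nat.Coprime (Nat.gcd k m) (Nat.gcd k n) :=
      Nat.Coprime.coprime_dvd_left (Nat.gcd_dvd_right k m)
        (Nat.Coprime.coprime_dvd_right (Nat.gcd_dvd_right k n) h)
    exact Nat.dvd_gcd (hco.mul_dvd_of_dvd_of_dvd (Nat.gcd_dvd_left k m) (Nat.gcd_dvd_left k n))
      (Nat.mul_dvd_mul (Nat.gcd_dvd_right k m) (Nat.gcd_dvd_right k n))

private lemma gcd_mod {l d m : ℕ} (hd : d ∣ m) : Nat.gcd (l % m) d = Nat.gcd l d := by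
  rw [Nat.gcd_comm, Nat.gcd_rec d (l % m), Nat.mod_mod_of_dvd l hd, ← Nat.gcd_rec d l,
    Nat.gcd_comm]

private lemma sum_Icc_eq_sum_zmod {m : ℕ} [NeZero m] (h : ℕ → ℚ)
    (hper : ∀ l, h (l % m) = h l) :
    ∑ l ∈ Finset.Icc 1 m, h l = ∑ x : ZMod m, h x.val := by
  have hm : m ≠ 0 := NeZero.ne m
  have h2 : ∑ x : ZMod m, h x.val = ∑ l ∈ Finset.range m, h l := by
    apply Finset.sum_nbij' (fun x : ZMod m => x.val) (fun l : ℕ => (l : ZMod m))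
    · intro x _; exact Finset.mem_range.mpr (ZMod.val_lt x)
    · intro l _; exact Finset.mem_univ _
    · intro x _; exact ZMod.natCast_zmod_val x
    · intro l hl; exact ZMod.val_cast_of_lt (Finset.mem_range.mp hl)
    · intro x _; rfl
  rw [h2]
  have hm1 : 1 ≤ m := Nat.one_le_iff_ne_zero.mpr hm
  have hiccr : Finset.range m = insert 0 (Finset.Ico 1 m) := by
    ext x; simp [Finset.mem_range, Finset.mem_Ico]; omega
  have hicc : Finset.Icc 1 m = insert m (Finset.Ico 1 m) := by
    rw [Finset.Ico_insert_right hm1]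
  rw [hiccr, hicc, Finset.sum_insert (by simp), Finset.sum_insert (by simp)]
  have : h 0 = h m := by rw [← hper m, Nat.mod_self]
  rw [this]

private lemma sum_zmod_mul {m m' : ℕ} [NeZero m] [NeZero m'] (hco : Nat.Coprime m m')
    (f g : ℕ → ℚ) (hf : ∀ l, f (l % m) = f l) (hg : ∀ l, g (l % m') = g l) :
    ∑ x : ZMod (m * m'), f x.val * g x.val =
      (∑ x : ZMod m, f x.val) * (∑ y : ZMod m', g y.val) := by
  haveI : NeZero (m * m') := ⟨mul_ne_zero (NeZero.ne m) (NeZero.ne m')⟩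
  let e := ZMod.chineseRemainder hco
  have key : ∀ x : ZMod (m * m'),
      f x.val * g x.val = f (e x).1.val * g (e x).2.val := by
    intro x
    have hx : e x = ((x.val : ℕ) : ZMod m × ZMod m') := by
      have h0 : e x = ZMod.cast x := rfl
      rw [h0, ← ZMod.natCast_val]
    have h1 : (e x).1 = ((x.val : ℕ) : ZMod m) := by rw [hx]; simp
    have h2 : (e x).2 = ((x.val : ℕ) : ZMod m') := by rw [hx]; simp
    rw [h1, h2, ZMod.val_natCast, ZMod.val_natCast, hf, hg]
  calc ∑ x : ZMod (m * m'), f x.val * g x.val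
      = ∑ x : ZMod (m * m'), f (e x).1.val * g (e x).2.val := by
        exact Finset.sum_congr rfl fun x _ => key x
    _ = ∑ p : ZMod m × ZMod m', f p.1.val * g p.2.val :=
        Fintype.sum_bijective e e.toEquiv.bijective _ _ (fun x => rfl)
    _ = (∑ x : ZMod m, f x.val) * (∑ y : ZMod m', g y.val) := by
        rw [Fintype.sum_prod_type]
        simp only [Finset.sum_mul_sum]


private lemma factorization_finset_lcm {ι : Type*} [DecidableEq ι] (s : Finset ι) (f : ι → ℕ)
    (hf : ∀ i ∈ s, f i ≠ 0) (p : ℕ) :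
    (s.lcm f).factorization p = s.sup fun i => (f i).factorization p := by
  induction s using Finset.induction_on with
  | empty => simp
  | @insert a s ha ih =>
    have hlcm0 : s.lcm f ≠ 0 := by
      intro h0
      rw [Finset.lcm_eq_zero_iff] at h0
      obtain ⟨i, hi, hie⟩ := h0
      exact hf i (Finset.mem_insert_of_mem hi) hie
    rw [Finset.lcm_insert, Finset.sup_insert, lcm_eq_nat_lcm,
      Nat.factorization_lcm (hf a (Finset.mem_insert_self a s)) hlcm0]
    rw [Finsupp.sup_apply, ih (fun i hi => hf i (Finset.mem_insert_of_mem hi))]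

theorem stmt_19 (k : ℕ) (n : Fin k → ℕ) (hn : ∀ j, 0 < n j) (w : ℕ)
    (L : ℕ) (hL : L = Finset.univ.lcm n) :
    (1 / (L : ℚ)) * ∑ l ∈ Finset.Icc 1 L, (∏ j, (Nat.gcd l (n j) : ℚ)) ^ w =
      ∏ p ∈ L.primeFactors,
        (1 / ((p : ℚ) ^ (Finset.univ.sup fun j => (n j).factorization p))) *
          ∑ l ∈ Finset.Icc 1 (p ^ (Finset.univ.sup fun j => (n j).factorization p)),
            (∏ j, (Nat.gcd l (p ^ (n j).factorization p) : ℚ)) ^ w := by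
  classical
  have hn0 : ∀ j, n j ≠ 0 := fun j => (hn j).ne'
  have hL0 : L ≠ 0 := by
    rw [hL]
    intro h0
    rw [Finset.lcm_eq_zero_iff] at h0
    obtain ⟨j, hj, hje⟩ := h0
    exact hn0 j hje
  have hfacL : ∀ p, L.factorization p = Finset.univ.sup fun j => (n j).factorization p := by
    intro p
    rw [hL]
    exact factorization_finset_lcm _ _ (fun i _ => hn0 i) p
  set F : ℕ → ℚ := fun m =>
    (1 / (m : ℚ)) * ∑ l ∈ Finset.Icc 1 m, (∏ j, (Nat.gcd l (Nat.gcd m (n j)) : ℚ)) ^ w with hFdef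
  have hF1 : F 1 = 1 := by simp [hFdef]
  have hmult : ∀ x y : ℕ, Nat.Coprime x y → F (x * y) = F x * F y := by
    intro x y hxy
    rcases eq_or_ne x 0 with rfl | hx
    · simp [hFdef]
    rcases eq_or_ne y 0 with rfl | hy
    · simp [hFdef]
    haveI : NeZero x := ⟨hx⟩
    haveI : NeZero y := ⟨hy⟩
    haveI : NeZero (x * y) := ⟨mul_ne_zero hx hy⟩
    set f : ℕ → ℚ := fun l => (∏ j, (Nat.gcd l (Nat.gcd x (n j)) : ℚ)) ^ w with hfdef
    set g : ℕ → ℚ := fun l => (∏ j, (Nat.gcd l (Nat.gcd y (n j)) : ℚ)) ^ w with hgdef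
    have hfper : ∀ l, f (l % x) = f l := by
      intro l
      simp only [hfdef]
      congr 1
      refine Finset.prod_congr rfl fun j _ => ?_
      rw [gcd_mod (Nat.gcd_dvd_left x (n j))]
    have hgper : ∀ l, g (l % y) = g l := by
      intro l
      simp only [hgdef]
      congr 1
      refine Finset.prod_congr rfl fun j _ => ?_
      rw [gcd_mod (Nat.gcd_dvd_left y (n j))]
    have hsplit : ∀ l, (∏ j, (Nat.gcd l (Nat.gcd (x * y) (n j)) : ℚ)) ^ w = f l * g l := by
      intro l
      simp only [hfdef, hgdef, ← mul_pow, ← Finset.prod_mul_distrib]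
      congr 1
      refine Finset.prod_congr rfl fun j _ => ?_
      rw [← Nat.cast_mul]
      congr 1
      have hA : Nat.gcd (x * y) (n j) = Nat.gcd x (n j) * Nat.gcd y (n j) := by
        rw [Nat.gcd_comm, gcd_mul_coprime hxy, Nat.gcd_comm (n j) x, Nat.gcd_comm (n j) y]
      have hAB : Nat.Coprime (Nat.gcd x (n j)) (Nat.gcd y (n j)) :=
        Nat.Coprime.coprime_dvd_left (Nat.gcd_dvd_left _ _)
          (Nat.Coprime.coprime_dvd_right (Nat.gcd_dvd_left _ _) hxy)
      rw [hA, gcd_mul_coprime hAB]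
    have hfgper : ∀ l, f (l % (x * y)) * g (l % (x * y)) = f l * g l := by
      intro l
      rw [← hfper (l % (x * y)), Nat.mod_mod_of_dvd l (dvd_mul_right x y), hfper,
        ← hgper (l % (x * y)), Nat.mod_mod_of_dvd l (dvd_mul_left y x), hgper]
    have hsum : ∑ l ∈ Finset.Icc 1 (x * y), (∏ j, (Nat.gcd l (Nat.gcd (x * y) (n j)) : ℚ)) ^ w =
        (∑ l ∈ Finset.Icc 1 x, f l) * (∑ l ∈ Finset.Icc 1 y, g l) := by
      calc ∑ l ∈ Finset.Icc 1 (x * y), (∏ j, (Nat.gcd l (Nat.gcd (x * y) (n j)) : ℚ)) ^ w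
          = ∑ l ∈ Finset.Icc 1 (x * y), f l * g l :=
            Finset.sum_congr rfl fun l _ => hsplit l
        _ = ∑ z : ZMod (x * y), f z.val * g z.val :=
            sum_Icc_eq_sum_zmod (fun l => f l * g l) hfgper
        _ = (∑ z : ZMod x, f z.val) * (∑ z : ZMod y, g z.val) :=
            sum_zmod_mul hxy f g hfper hgper
        _ = (∑ l ∈ Finset.Icc 1 x, f l) * (∑ l ∈ Finset.Icc 1 y, g l) := by
            rw [← sum_Icc_eq_sum_zmod f hfper, ← sum_Icc_eq_sum_zmod g hgper]
    show (1 / ((x * y : ℕ) : ℚ)) * _ = ((1 / (x : ℚ)) * _) * ((1 / (y : ℚ)) * _)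
    rw [hsum]
    push_cast
    field_simp
    rfl
  have key := Nat.multiplicative_factorization F hmult hF1 hL0
  have hlhs : (1 / (L : ℚ)) * ∑ l ∈ Finset.Icc 1 L, (∏ j, (Nat.gcd l (n j) : ℚ)) ^ w = F L := by
    simp only [hFdef]
    congr 1
    refine Finset.sum_congr rfl fun l _ => ?_
    congr 1
    refine Finset.prod_congr rfl fun j _ => ?_
    have : Nat.gcd L (n j) = n j :=
      Nat.gcd_eq_right (hL ▸ Finset.dvd_lcm (Finset.mem_univ j))
    rw [this]
  rw [hlhs, key, Finsupp.prod, Nat.support_factorization]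
  refine Finset.prod_congr rfl fun p hp => ?_
  have hpp : p.Prime := Nat.prime_of_mem_primeFactors hp
  rw [hfacL p]
  set ν := Finset.univ.sup fun j => (n j).factorization p with hν
  have hgcdp : ∀ j, Nat.gcd (p ^ ν) (n j) = p ^ (n j).factorization p := by
    intro j
    apply Nat.dvd_antisymm
    · obtain ⟨i, hi, hgi⟩ := (Nat.dvd_prime_pow hpp).mp (Nat.gcd_dvd_left (p ^ ν) (n j))
      rw [hgi]
      apply pow_dvd_pow
      have hpi : p ^ i ∣ n j := hgi ▸ Nat.gcd_dvd_right _ _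
      exact (Nat.Prime.pow_dvd_iff_le_factorization hpp (hn0 j)).mp hpi
    · refine Nat.dvd_gcd (pow_dvd_pow p ?_) (Nat.ordProj_dvd _ p)
      rw [hν]
      exact Finset.le_sup (f := fun j => (n j).factorization p) (Finset.mem_univ j)
  simp only [hFdef]
  push_cast
  congr 1
  refine Finset.sum_congr rfl fun l _ => ?_
  congr 1
  refine Finset.prod_congr rfl fun j _ => ?_
  rw [hgcdp j]
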